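/- arXiv:2407.09906 — 2 statements merged into one kernel-verified Lean document; each statement's English description precedes it below -/
import Mathlib

section
/- Let 1 → N → P →^ρ G → 1 be an extension of profinite groups with N center-free, let I be a closed normal subgroup of G, and let 1 → N → P' → G/I → 1 be the extension obtained as P' = P/K for a closed normal subgroup K of P such that the quotient map ρ_P : P → P' restricts to the identity on N and covers the projection G → G/I. Then K = ρ^{-1}(I) ∩ C_P(N), where C_P(N) is the centralizer of N in P. In particular, the kernel of ρ_P is determined group-theoretically as ρ^{-1}(I) ∩ C_P(N). -/
open Pointwise


/-- Let `1 → N → P →ρ G → 1` be an extension of profinite groups with `N = Ker ρ`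
center-free, `I` a closed normal subgroup of `G`, and `K` a closed normal subgroup of `P`
such that the quotient `P → P/K` restricts to the identity on `N` (i.e. `K ∩ N = 1`) and
covers `G → G/I` (i.e. the induced row `1 → N → P/K → G/I → 1` is exact, equivalently
`K · N = ρ⁻¹(I)`).  Then `K = ρ⁻¹(I) ∩ C_P(N)`, where `C_P(N)` is the centralizer of
`N` in `P`. -/
theorem stmt_8 (P G : Type*)
    [Group P] [TopologicalSpace P] [IsTopologicalGroup P] [CompactSpace P]
    [TotallyDisconnectedSpace P]
    [Group G] [TopologicalSpace G] [IsTopologicalGroup G] [CompactSpace G]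
    [TotallyDisconnectedSpace G]
    (ρ : P →* G) (hρc : Continuous ρ) (hρs : Function.Surjective ρ)
    (hNcf : Subgroup.center ↥ρ.ker = ⊥)
    (I : Subgroup G) (hIn : I.Normal) (hIc : IsClosed (I : Set G))
    (K : Subgroup P) (hKn : K.Normal) (hKc : IsClosed (K : Set P))
    (hKN : K ⊓ ρ.ker = ⊥)
    (hKI : K ⊔ ρ.ker = Subgroup.comap ρ I) :
    K = Subgroup.comap ρ I ⊓ Subgroup.centralizer (ρ.ker : Set P) := by
  -- K centralizes N
  have hKcent : ∀ k ∈ K, ∀ n ∈ ρ.ker, k * n = n * k := by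
    intro k hk n hn
    have h1 : k * n * k⁻¹ * n⁻¹ ∈ K := by
      have : n * k⁻¹ * n⁻¹ ∈ K := hKn.conj_mem k⁻¹ (K.inv_mem hk) n
      simpa [mul_assoc] using K.mul_mem hk this
    have h2 : k * n * k⁻¹ * n⁻¹ ∈ ρ.ker := by
      have : k * n * k⁻¹ ∈ ρ.ker := (MonoidHom.normal_ker ρ).conj_mem n hn k
      exact ρ.ker.mul_mem this (ρ.ker.inv_mem hn)
    have : k * n * k⁻¹ * n⁻¹ ∈ K ⊓ ρ.ker := ⟨h1, h2⟩
    rw [hKN, Subgroup.mem_bot] at this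
    have := congrArg (· * (n * k)) this
    simpa [mul_assoc] using this
  apply le_antisymm
  · intro k hk
    refine ⟨?_, ?_⟩
    · rw [← hKI]; exact Subgroup.mem_sup_left hk
    · intro n hn
      exact (hKcent k hk n hn).symm
  · intro p hp
    obtain ⟨hpI, hpC⟩ := hp
    have hpKN : p ∈ K ⊔ ρ.ker := by rw [hKI]; exact hpI
    have hpmul : p ∈ (K : Set P) * (ρ.ker : Set P) := by
      rw [← Subgroup.mul_normal]; exact hpKN
    obtain ⟨k, hk, n, hn, rfl⟩ := hpmul
    -- show n = 1
    have hncent : ∀ m ∈ ρ.ker, n * m = m * n := by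
      intro m hm
      have hpm : (k * n) * m = m * (k * n) := (Subgroup.mem_centralizer_iff.mp hpC m hm).symm
      have hkm : k * m = m * k := hKcent k hk m hm
      have : k * (n * m) = k * (m * n) := by
        calc k * (n * m) = (k * n) * m := by group
        _ = m * (k * n) := hpm
        _ = (m * k) * n := by group
        _ = (k * m) * n := by rw [hkm]
        _ = k * (m * n) := by group
      exact mul_left_cancel this
    have hnmem : (⟨n, hn⟩ : ρ.ker) ∈ Subgroup.center ↥ρ.ker := by
      rw [Subgroup.mem_center_iff]
      intro m
      ext
      exact (hncent m.1 m.2).symm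
    rw [hNcf, Subgroup.mem_bot] at hnmem
    have : n = 1 := congrArg Subtype.val hnmem
    simpa [this] using hk
end

section
/- Let p be a prime number. The continuous homomorphism from Ẑ (the profinite completion of ℤ) to the unit group of Ẑ^{(p')} = ∏_{ℓ ≠ p} ℤ_ℓ that sends 1 to p (and is obtained by continuously extending n ↦ p^n) is injective. -/
/-- The primes different from a fixed prime `p`. -/
def PrimesNe (p : ℕ) : Type := {ℓ : ℕ // ℓ.Prime ∧ ℓ ≠ p}

instance (p : ℕ) (ℓ : PrimesNe p) : Fact ℓ.val.Prime := ⟨ℓ.prop.1⟩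

instance (q : Nat.Primes) : Fact q.val.Prime := ⟨q.prop⟩

/-- `Ẑ`, realized as the product over all primes `q` of the `q`-adic integers. -/
def ZHat : Type := ∀ q : Nat.Primes, ℤ_[q.val]

noncomputable instance : CommRing ZHat := by unfold ZHat; infer_instance
noncomputable instance : TopologicalSpace ZHat := by unfold ZHat; infer_instance

/-- `Ẑ^{(p')} = ∏_{ℓ ≠ p} ℤ_ℓ`, the maximal pro-prime-to-`p` quotient of `Ẑ`. -/
def ZHatAwayUnits (p : ℕ) : Type := ∀ ℓ : PrimesNe p, (ℤ_[ℓ.val])ˣ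

noncomputable instance (p : ℕ) : CommGroup (ZHatAwayUnits p) := by
  unfold ZHatAwayUnits; infer_instance
noncomputable instance (p : ℕ) : TopologicalSpace (ZHatAwayUnits p) := by
  unfold ZHatAwayUnits; infer_instance

/-- `PadicInt.toZModPow` is continuous (for the discrete topology on `ZMod (p ^ k)`). -/
lemma continuous_toZModPow (p : ℕ) [Fact p.Prime] (k : ℕ) :
    Continuous (PadicInt.toZModPow (p := p) k) := by
  have h : ∀ c : ZMod (p ^ k), IsOpen (PadicInt.toZModPow (p := p) k ⁻¹' {c}) := by
    intro c
    rw [Metric.isOpen_iff]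
    intro x hx
    have hp0 : (0:ℝ) < p := by exact_mod_cast (Fact.out : p.Prime).pos
    refine ⟨(p : ℝ) ^ (-(k : ℤ) + 1), zpow_pos hp0 _, fun y hy => ?_⟩
    have h1 : ‖y - x‖ ≤ (p : ℝ) ^ (-(k : ℤ)) := by
      rw [PadicInt.norm_le_pow_iff_norm_lt_pow_add_one]
      simpa [dist_eq_norm] using hy
    rw [PadicInt.norm_le_pow_iff_mem_span_pow, ← PadicInt.ker_toZModPow, RingHom.mem_ker,
      map_sub, sub_eq_zero] at h1
    have hx' : PadicInt.toZModPow (p := p) k x = c := hx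
    simp only [Set.mem_preimage, Set.mem_singleton_iff]
    rw [h1, hx']
  rw [continuous_def]
  intro s _
  have : (PadicInt.toZModPow (p := p) k) ⁻¹' s =
      ⋃ c ∈ s, (PadicInt.toZModPow (p := p) k) ⁻¹' {c} := by
    ext y; simp
  rw [this]
  exact isOpen_biUnion fun c _ => h c

/-- For primes `p`, `q` and any `m`, there is a prime `ℓ ≠ p` and an `s` such that `q ^ m`
divides the multiplicative order of `p` modulo `ℓ ^ s`. -/
lemma key_order (p q : ℕ) (hp : p.Prime) (hq : q.Prime) (m : ℕ) :
    ∃ ℓ : ℕ, ℓ.Prime ∧ ℓ ≠ p ∧ ∃ s : ℕ, ∃ hc : p.Coprime (ℓ ^ s),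
      q ^ m ∣ orderOf (ZMod.unitOfCoprime p hc) := by
  rcases Nat.eq_zero_or_pos m with rfl | hm
  · obtain ⟨ℓ, hℓge, hℓ⟩ := Nat.exists_infinite_primes (p + 1)
    exact ⟨ℓ, hℓ, by omega, 0, by simpa using Nat.coprime_one_right p, by simp⟩
  have hq2 := hq.two_le
  by_cases hqp : q = p
  · -- case q = p ; after subst, p is replaced by q
    subst hqp
    set a : ℕ := q ^ (q ^ (m - 1)) with ha_def
    have ha2 : 2 ≤ a := Nat.one_lt_pow (pow_pos hq.pos (m - 1)).ne' hq.one_lt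
    set N : ℕ := ∑ i ∈ Finset.range q, a ^ i with hN_def
    have hN : 1 + a ≤ N := by
      have hsub : ({0, 1} : Finset ℕ) ⊆ Finset.range q := by
        intro i hi
        simp only [Finset.mem_insert, Finset.mem_singleton] at hi
        rcases hi with rfl | rfl <;> simp [Finset.mem_range] <;> omega
      have := Finset.sum_le_sum_of_subset (f := fun i => a ^ i) hsub
      simpa [Finset.sum_pair (by omega : (0:ℕ) ≠ 1)] using this
    have hN1 : 1 < N := by omega
    set ℓ : ℕ := N.minFac with hℓ_def
    have hℓ : ℓ.Prime := Nat.minFac_prime (by omega)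
    have hdvd : ℓ ∣ N := Nat.minFac_dvd N
    haveI : Fact (1 < q) := ⟨hq.one_lt⟩
    have hNq : ¬ q ∣ N := by
      intro h
      have h0 : (N : ZMod q) = 0 := (ZMod.natCast_eq_zero_iff _ _).mpr h
      have ha0 : (a : ZMod q) = 0 := by
        rw [ha_def]
        push_cast
        rw [ZMod.natCast_self]
        exact zero_pow (pow_pos hq.pos _).ne'
      have h1 : (N : ZMod q) = 1 := by
        rw [hN_def]
        push_cast
        rw [ha0]
        simp [zero_pow_eq, Finset.sum_ite_eq' (Finset.range q) 0, Finset.mem_range, hq.pos]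
      rw [h0] at h1
      exact zero_ne_one h1
    have hℓq : ℓ ≠ q := fun h => hNq (h ▸ hdvd)
    have hcop : q.Coprime (ℓ ^ 1) := ((Nat.coprime_primes hq hℓ).mpr (Ne.symm hℓq)).pow_right 1
    haveI : NeZero (ℓ ^ 1) := ⟨(pow_pos hℓ.pos 1).ne'⟩
    refine ⟨ℓ, hℓ, hℓq, 1, hcop, ?_⟩
    set pu := ZMod.unitOfCoprime q hcop with hpu
    have hℓN : (N : ZMod (ℓ ^ 1)) = 0 :=
      (ZMod.natCast_eq_zero_iff _ _).mpr (by simpa [pow_one] using hdvd)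
    have hsum0 : (∑ i ∈ Finset.range q, (a : ZMod (ℓ ^ 1)) ^ i) = 0 := by
      rw [hN_def] at hℓN
      push_cast at hℓN
      exact hℓN
    have hap : (a : ZMod (ℓ ^ 1)) ^ q = 1 := by
      have hg := geom_sum_mul (a : ZMod (ℓ ^ 1)) q
      rw [hsum0, zero_mul] at hg
      exact sub_eq_zero.mp hg.symm
    have hcast : (a : ZMod (ℓ ^ 1)) = (q : ZMod (ℓ ^ 1)) ^ (q ^ (m - 1)) := by
      rw [ha_def]; push_cast; rfl
    have hpum : pu ^ (q ^ m) = 1 := by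
      apply Units.ext
      have : (q : ZMod (ℓ ^ 1)) ^ (q ^ m) = ((a : ZMod (ℓ ^ 1)) ^ q) := by
        rw [hcast, ← pow_mul, ← pow_succ, Nat.sub_add_cancel hm]
      simp only [Units.val_pow_eq_pow_val, ZMod.coe_unitOfCoprime, Units.val_one, hpu]
      rw [this, hap]
    have hord1 : orderOf pu ∣ q ^ m := orderOf_dvd_iff_pow_eq_one.mpr hpum
    have hord2 : ¬ orderOf pu ∣ q ^ (m - 1) := by
      intro h
      have h1 : pu ^ (q ^ (m - 1)) = 1 := orderOf_dvd_iff_pow_eq_one.mp h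
      have ha1 : (a : ZMod (ℓ ^ 1)) = 1 := by
        have := congrArg Units.val h1
        simp only [Units.val_pow_eq_pow_val, ZMod.coe_unitOfCoprime, Units.val_one, hpu] at this
        rw [hcast]
        exact this
      have hNp : (N : ZMod (ℓ ^ 1)) = q := by
        rw [hN_def]
        push_cast
        rw [ha1]
        simp
      rw [hℓN] at hNp
      have : ℓ ∣ q := by
        simpa [pow_one] using (ZMod.natCast_eq_zero_iff q (ℓ ^ 1)).mp hNp.symm
      exact hℓq ((Nat.prime_dvd_prime_iff_eq hℓ hq).mp this)
    obtain ⟨j, hj, hD⟩ := (Nat.dvd_prime_pow hq).mp hord1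
    have hjm : j = m := by
      by_contra hne
      exact hord2 (hD ▸ pow_dvd_pow q (by omega))
    rw [hD, hjm]
  · -- case q ≠ p
    have hcop : p.Coprime q := (Nat.coprime_primes hp hq).mpr (fun h => hqp h.symm)
    set E : ℕ := (q - 1) * q ^ (m - 1) with hE_def
    have hE1 : 1 ≤ E := Nat.mul_pos (by omega : 0 < q - 1) (pow_pos hq.pos _)
    set s : ℕ := p ^ E with hs_def
    have hs0 : 0 < s := pow_pos hp.pos E
    have hps : p ^ E < q ^ s := lt_of_lt_of_le Nat.lt_two_pow_self (Nat.pow_le_pow_left hq.two_le _)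
    have hcops : p.Coprime (q ^ s) := hcop.pow_right s
    haveI : NeZero (q ^ s) := ⟨(pow_pos hq.pos s).ne'⟩
    refine ⟨q, hq, fun h => hqp h, s, hcops, ?_⟩
    set pu := ZMod.unitOfCoprime p hcops with hpu
    set D := orderOf pu with hD
    have hD0 : D ≠ 0 := (orderOf_pos pu).ne'
    have hDcard : D ∣ q ^ (s - 1) * (q - 1) := by
      rw [hD, ← Nat.totient_prime_pow hq hs0, ← ZMod.card_units_eq_totient]
      exact orderOf_dvd_card
    have hnotdvd : ¬ D ∣ E := by
      intro h
      have h1 : pu ^ E = 1 := orderOf_dvd_iff_pow_eq_one.mp h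
      have h2 : ((p : ZMod (q ^ s))) ^ E = 1 := by
        have := congrArg Units.val h1
        simpa [ZMod.coe_unitOfCoprime, hpu] using this
      have h3 : (p ^ E : ℕ) ≡ 1 [MOD q ^ s] := by
        rw [← ZMod.natCast_eq_natCast_iff]
        push_cast
        exact h2
      have hpE2 : 2 ≤ p ^ E := Nat.one_lt_pow (by omega) hp.one_lt
      have h4 : q ^ s ∣ p ^ E - 1 := (Nat.modEq_iff_dvd' (by omega)).mp h3.symm
      have h5 : q ^ s ≤ p ^ E - 1 := Nat.le_of_dvd (by omega) h4
      omega
    by_contra hcon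
    have hf : D.factorization q < m := by
      have := (Nat.Prime.pow_dvd_iff_le_factorization hq hD0).not.mp hcon
      omega
    apply hnotdvd
    have hop : q ^ (D.factorization q) ∣ q ^ (m - 1) := pow_dvd_pow q (by omega)
    have hoc : (D / q ^ (D.factorization q)) ∣ (q - 1) := by
      have h5 : (D / q ^ (D.factorization q)) ∣ q ^ (s - 1) * (q - 1) :=
        (Nat.ordCompl_dvd D q).trans hDcard
      exact ((Nat.coprime_ordCompl hq hD0).symm.pow_right (s - 1)).dvd_of_dvd_mul_left h5
    calc D = q ^ (D.factorization q) * (D / q ^ (D.factorization q)) :=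
          (Nat.ordProj_mul_ordCompl_eq_self D q).symm
      _ ∣ q ^ (m - 1) * (q - 1) := mul_dvd_mul hop hoc
      _ = E := by rw [hE_def, mul_comm]

/-- The natural numbers are dense in `Ẑ`. -/
lemma denseRange_natCast_ZHat : DenseRange (Nat.cast : ℕ → ZHat) := by
  intro x
  rw [mem_closure_iff]
  intro o ho hxo
  obtain ⟨I, U, hU, hsub⟩ := isOpen_pi_iff.mp ho x hxo
  have hex : ∀ q : Nat.Primes, ∃ k : ℕ, q ∈ I →
      ∀ y : ℤ_[q.val], PadicInt.toZModPow k y = PadicInt.toZModPow k (x q) → y ∈ U q := by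
    intro q
    by_cases hq : q ∈ I
    · obtain ⟨ε, hε, hball⟩ := Metric.isOpen_iff.mp (hU q hq).1 (x q) (hU q hq).2
      obtain ⟨k, hk⟩ := PadicInt.exists_pow_neg_lt q.val hε
      refine ⟨k, fun _ y hy => hball ?_⟩
      have h1 : y - x q ∈ RingHom.ker (PadicInt.toZModPow (p := q.val) k) := by
        rw [RingHom.mem_ker, map_sub, hy, sub_self]
      rw [PadicInt.ker_toZModPow, ← PadicInt.norm_le_pow_iff_mem_span_pow] at h1
      rw [Metric.mem_ball, dist_eq_norm]
      exact lt_of_le_of_lt h1 hk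
    · exact ⟨0, fun h => absurd h hq⟩
  choose k hk using hex
  set K : ℕ := I.sup k with hK
  have hcrt := Nat.chineseRemainderOfFinset
    (fun q : Nat.Primes => (PadicInt.toZModPow K (x q)).val)
    (fun q : Nat.Primes => q.val ^ K) I
    (fun q _ => (pow_pos q.prop.pos K).ne')
    (by
      intro q hq r hr hqr
      have : q.val ≠ r.val := fun h => hqr (Subtype.ext h)
      exact Nat.Coprime.pow K K ((Nat.coprime_primes q.prop r.prop).mpr this))
  obtain ⟨n, hn⟩ := hcrt
  refine ⟨(n : ZHat), hsub ?_, ⟨n, rfl⟩⟩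
  intro q hq
  haveI : NeZero (q.val ^ K) := ⟨(pow_pos q.prop.pos K).ne'⟩
  apply hk q hq
  have hKq : k q ≤ K := Finset.le_sup hq
  have hnq : ((n : ZHat) q) = (n : ℤ_[q.val]) := rfl
  have hKeq : PadicInt.toZModPow K ((n : ZHat) q) = PadicInt.toZModPow K (x q) := by
    rw [hnq, map_natCast]
    have := (ZMod.natCast_eq_natCast_iff _ _ _).mpr (hn q hq)
    rw [this, ZMod.natCast_zmod_val]
  calc PadicInt.toZModPow (k q) ((n : ZHat) q)
      = ZMod.cast (PadicInt.toZModPow K ((n : ZHat) q)) := (PadicInt.cast_toZModPow _ _ hKq _).symm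
    _ = ZMod.cast (PadicInt.toZModPow K (x q)) := by rw [hKeq]
    _ = PadicInt.toZModPow (k q) (x q) := PadicInt.cast_toZModPow _ _ hKq _

/-- For a prime `p`, the continuous homomorphism `Ẑ → (Ẑ^{(p')})ˣ` sending `1` to `p`
(the continuous extension of `n ↦ pⁿ`) is injective. -/
theorem stmt_12 (p : ℕ) (hp : p.Prime)
    (u : ZHatAwayUnits p) (hu : ∀ ℓ : PrimesNe p, ((u ℓ : (ℤ_[ℓ.val])ˣ) : ℤ_[ℓ.val]) = (p : ℤ_[ℓ.val]))
    (f : Multiplicative ZHat →* ZHatAwayUnits p)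
    (hfc : Continuous f) (hf1 : f (Multiplicative.ofAdd (1 : ZHat)) = u) :
    Function.Injective f := by
  classical
  rw [injective_iff_map_eq_one]
  intro z hz
  have hx0 : Multiplicative.toAdd z = (0 : ZHat) → z = 1 := by
    intro h
    rw [← ofAdd_toAdd z, h, ofAdd_zero]
  apply hx0
  funext q
  show Multiplicative.toAdd z q = (0 : ℤ_[q.val])
  rw [← PadicInt.ext_of_toZModPow]
  intro m
  rw [map_zero]
  obtain ⟨ℓ, hℓ, hℓp, s, hc, hdvd⟩ := key_order p q.val hp q.prop m
  haveI : Fact ℓ.Prime := ⟨hℓ⟩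
  haveI : NeZero (ℓ ^ s) := ⟨(pow_pos hℓ.pos s).ne'⟩
  set L : PrimesNe p := ⟨ℓ, hℓ, hℓp⟩ with hL
  set pu := ZMod.unitOfCoprime p hc with hpu
  -- well-definedness of discrete logarithm mod q ^ m
  have hwd : ∀ a b : ℕ, (p : ZMod (ℓ ^ s)) ^ a = (p : ZMod (ℓ ^ s)) ^ b →
      (a : ZMod (q.val ^ m)) = (b : ZMod (q.val ^ m)) := by
    intro a b hab
    have hab' : pu ^ a = pu ^ b := by
      apply Units.ext
      simpa [Units.val_pow_eq_pow_val, ZMod.coe_unitOfCoprime, hpu] using hab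
    have hmod := pow_eq_pow_iff_modEq.mp hab'
    exact (ZMod.natCast_eq_natCast_iff _ _ _).mpr (hmod.of_dvd hdvd)
  set χ : ZHat → ZMod (ℓ ^ s) := fun w =>
    PadicInt.toZModPow s ((f (Multiplicative.ofAdd w) L : (ℤ_[L.val])ˣ) : ℤ_[L.val]) with hχ
  have hχc : Continuous χ := by
    apply (continuous_toZModPow ℓ s).comp
    apply Units.continuous_val.comp
    exact (continuous_apply L).comp (hfc.comp continuous_ofAdd)
  set σ : ZMod (ℓ ^ s) → ZMod (q.val ^ m) := fun v =>
    if h : ∃ n : ℕ, (p : ZMod (ℓ ^ s)) ^ n = v then ((Nat.find h : ℕ) : ZMod (q.val ^ m))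
    else 0 with hσdef
  have hσ : ∀ n : ℕ, σ ((p : ZMod (ℓ ^ s)) ^ n) = (n : ZMod (q.val ^ m)) := by
    intro n
    have hex : ∃ j : ℕ, (p : ZMod (ℓ ^ s)) ^ j = (p : ZMod (ℓ ^ s)) ^ n := ⟨n, rfl⟩
    rw [hσdef]
    show (if h : ∃ j : ℕ, (p : ZMod (ℓ ^ s)) ^ j = (p : ZMod (ℓ ^ s)) ^ n then
      ((Nat.find h : ℕ) : ZMod (q.val ^ m)) else 0) = (n : ZMod (q.val ^ m))
    rw [dif_pos hex]
    exact hwd _ _ (Nat.find_spec hex)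
  set A : Set ZHat := {w | PadicInt.toZModPow m (w q) = σ (χ w)} with hA
  have hclosed : IsClosed A :=
    isClosed_eq ((continuous_toZModPow q.val m).comp (continuous_apply q))
      ((continuous_of_discreteTopology : Continuous σ).comp hχc)
  have hnat : ∀ n : ℕ, (n : ZHat) ∈ A := by
    intro n
    show PadicInt.toZModPow m ((n : ZHat) q) = σ (χ (n : ZHat))
    have h1 : PadicInt.toZModPow m ((n : ZHat) q) = (n : ZMod (q.val ^ m)) := by
      show PadicInt.toZModPow m ((n : ℤ_[q.val])) = _
      rw [map_natCast]
    have h2 : χ (n : ZHat) = (p : ZMod (ℓ ^ s)) ^ n := by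
      show PadicInt.toZModPow s ((f (Multiplicative.ofAdd ((n : ZHat))) L :
        (ℤ_[L.val])ˣ) : ℤ_[L.val]) = (p : ZMod (ℓ ^ s)) ^ n
      have hofAdd : Multiplicative.ofAdd ((n : ZHat)) = (Multiplicative.ofAdd (1 : ZHat)) ^ n := by
        rw [← ofAdd_nsmul]
        congr 1
        rw [nsmul_eq_mul, mul_one]
      rw [hofAdd, map_pow, hf1]
      calc PadicInt.toZModPow s (((u ^ n) L : (ℤ_[L.val])ˣ) : ℤ_[L.val])
          = PadicInt.toZModPow s (((u L : (ℤ_[L.val])ˣ) : ℤ_[L.val]) ^ n) := rfl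
        _ = PadicInt.toZModPow s ((p : ℤ_[L.val]) ^ n) := by rw [hu L]
        _ = (p : ZMod (ℓ ^ s)) ^ n := by rw [map_pow, map_natCast]
    rw [h1, h2, hσ]
  have huniv : A = Set.univ := by
    have hsub : Set.range (Nat.cast : ℕ → ZHat) ⊆ A := by
      rintro _ ⟨n, rfl⟩
      exact hnat n
    have h4 := closure_mono hsub
    rw [hclosed.closure_eq] at h4
    rw [Set.eq_univ_iff_forall]
    intro w
    exact h4 (denseRange_natCast_ZHat w)
  have hxA : (Multiplicative.toAdd z) ∈ A := huniv ▸ Set.mem_univ _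
  have hχx : χ (Multiplicative.toAdd z) = 1 := by
    rw [hχ]
    show PadicInt.toZModPow s ((f (Multiplicative.ofAdd (Multiplicative.toAdd z)) L :
      (ℤ_[L.val])ˣ) : ℤ_[L.val]) = 1
    rw [ofAdd_toAdd, hz]
    show PadicInt.toZModPow s (((1 : (ℤ_[L.val])ˣ) : ℤ_[L.val])) = 1
    rw [Units.val_one, map_one]
  have hσ1 : σ (1 : ZMod (ℓ ^ s)) = 0 := by simpa using hσ 0
  have := hxA
  rw [Set.mem_setOf_eq, hχx, hσ1] at this
  exact this
end
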